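/- arXiv:1510.08592 — 2 statements merged into one kernel-verified Lean document; each statement's English description precedes it below -/
import Mathlib

section
/- Let K, D, λ, m be positive integers with D < K, λ dividing K − D, K − D dividing K + λ, q := (K + λ)/(K − D) ≥ 2, and s := (K − D)/λ ≥ 2; set r = K − D and p = K − D − λ. Consider the index coding problem with mK messages and antidotes A'_k = {k + iK : 1 ≤ i ≤ m−1} ∪ {k + j + iK : 1 ≤ j ≤ D, 0 ≤ i ≤ m−1} ⊆ ZMod (mK) for each k ∈ ZMod (mK). Then the set C^(m) consisting of the vectors Σ_{v=0}^{q−1} e'_{k+vr} + Σ_{u=1}^{s−2} e'_{k+(q−1)r+uλ} for 1 ≤ k ≤ λ, the vectors Σ_{v=0}^{q−2} e'_{k+vr} + e'_{k+(q−1)r−λ} for λ+1 ≤ k ≤ p, and the vectors Σ_{v=0}^{q−2} e'_{k+vr} + Σ_{u=1}^{s−1} e'_{k+(q−2)r+uλ} for p+1 ≤ k ≤ r, where e'_l = Σ_{t=0}^{m−1} e_{l+tK} ∈ V_{mK}, is a valid scalar linear index code of length r = K − D for this problem, and moreover every valid scalar linear index code for this problem has length at least K − D. -/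
/-- Standard basis vector `e_j` of `V_n = ZMod n → GF(2)`. -/
def stdVec (n : ℕ) (j : ZMod n) : ZMod n → ZMod 2 := fun i => if i = j then 1 else 0

/-- `C` is a valid scalar linear index code over `GF(2)` for the index coding problem
with `n` messages and antidote pattern `A`. -/
def IsIndexCode (n : ℕ) (A : ZMod n → Set (ZMod n)) (C : Set (ZMod n → ZMod 2)) : Prop :=
  C.Finite ∧ ∀ k : ZMod n,
    stdVec n k ∈ Submodule.span (ZMod 2) (C ∪ (stdVec n '' A k))

/-- `e'_l = Σ_{t=0}^{m-1} e_{l+tK} ∈ V_{mK}`. -/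
def eSum (K m : ℕ) (l : ℕ) : ZMod (m * K) → ZMod 2 :=
  ∑ t ∈ Finset.range m, stdVec (m * K) ((l + t * K : ℕ))

/-- The lift of the one-sided consecutive antidote pattern with parameter `D`. -/
def consecLiftedA (K D m : ℕ) (k : ZMod (m * K)) : Set (ZMod (m * K)) :=
  {x | ∃ i : ℕ, 1 ≤ i ∧ i ≤ m - 1 ∧ x = k + (i * K : ℕ)} ∪
  {x | ∃ j i : ℕ, 1 ≤ j ∧ j ≤ D ∧ i ≤ m - 1 ∧ x = k + (j + i * K : ℕ)}

/-- The lifted code of Corollary 3 (lift of Case X), with `r = K - D`,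
`p = K - D - λ`, `q = (K + λ)/(K - D)` and `s = (K - D)/λ`. -/
def codeCaseX (K D lam m : ℕ) : Set (ZMod (m * K) → ZMod 2) :=
  {v | ∃ k : ℕ, 1 ≤ k ∧ k ≤ lam ∧
    v = (∑ w ∈ Finset.range ((K + lam) / (K - D)), eSum K m (k + w * (K - D))) +
      ∑ u ∈ Finset.Icc 1 ((K - D) / lam - 2),
        eSum K m (k + ((K + lam) / (K - D) - 1) * (K - D) + u * lam)} ∪
  {v | ∃ k : ℕ, lam + 1 ≤ k ∧ k ≤ K - D - lam ∧
    v = (∑ w ∈ Finset.range ((K + lam) / (K - D) - 1), eSum K m (k + w * (K - D))) +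
      eSum K m (k + ((K + lam) / (K - D) - 1) * (K - D) - lam)} ∪
  {v | ∃ k : ℕ, K - D - lam + 1 ≤ k ∧ k ≤ K - D ∧
    v = (∑ w ∈ Finset.range ((K + lam) / (K - D) - 1), eSum K m (k + w * (K - D))) +
      ∑ u ∈ Finset.Icc 1 ((K - D) / lam - 1),
        eSum K m (k + ((K + lam) / (K - D) - 2) * (K - D) + u * lam)}

lemma addSelf {n : ℕ} (v : ZMod n → ZMod 2) : v + v = 0 := by
  funext i; exact CharTwo.add_self_eq_zero _

lemma mem_of_add_mem {n : ℕ} (M : Submodule (ZMod 2) (ZMod n → ZMod 2))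
    {v w : ZMod n → ZMod 2} (h : v + w ∈ M) (hw : w ∈ M) : v ∈ M := by
  have h2 := Submodule.add_mem M h hw
  rw [add_assoc, addSelf, add_zero] at h2
  exact h2


lemma sum_Icc_one {W : Type*} [AddCommMonoid W] (g : ℕ → W) (T : ℕ) :
    ∑ u ∈ Finset.Icc 1 T, g u = ∑ u ∈ Finset.range T, g (u+1) := by
  induction T with
  | zero => simp
  | succ k ih => rw [Finset.sum_Icc_succ_top (by omega), ih, Finset.sum_range_succ]


lemma eSum_add_K (K m l : ℕ) : eSum K m (l + K) = eSum K m l := by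
  unfold eSum
  have h1 : ∀ t : ℕ, stdVec (m*K) ((l + K + t * K : ℕ)) = stdVec (m*K) ((l + (t+1) * K : ℕ)) := by
    intro t; congr 1; push_cast; ring
  simp only [h1]
  have h2 := Finset.sum_range_succ' (fun t => stdVec (m*K) ((l + t * K : ℕ))) m
  have h3 := Finset.sum_range_succ (fun t => stdVec (m*K) ((l + t * K : ℕ))) m
  have h4 : stdVec (m*K) ((l + m * K : ℕ)) = stdVec (m*K) ((l + 0 * K : ℕ)) := by
    congr 1; push_cast; rw [show ((m:ZMod (m*K)) * K) = ((m*K : ℕ) : ZMod (m*K)) by push_cast; ring, ZMod.natCast_self]; ring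
  have := h2.symm.trans h3
  -- this : ∑ range m (t+1 version) + (l + 0*K) = ∑ range m + (l+m*K)
  rw [h4] at this
  have := congrArg (· + stdVec (m*K) ((l + 0 * K : ℕ))) this
  simp only [add_assoc, addSelf, add_zero] at this
  exact this

lemma eSum_add_mul (K m l t : ℕ) : eSum K m (l + t * K) = eSum K m l := by
  induction t with
  | zero => simp
  | succ n ih => rw [show l + (n+1)*K = (l + n*K) + K by ring, eSum_add_K, ih]

lemma eSum_congr (K m : ℕ) (hK : 0 < K) {x y : ℕ} (h : x % K = y % K) :
    eSum K m x = eSum K m y := by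
  have hx : eSum K m x = eSum K m (x % K) := by
    conv_lhs => rw [← Nat.mod_add_div' x K]
    rw [eSum_add_mul]
  have hy : eSum K m y = eSum K m (y % K) := by
    conv_lhs => rw [← Nat.mod_add_div' y K]
    rw [eSum_add_mul]
  rw [hx, hy, h]

section idlemmas
variable {n : ℕ}

lemma idI (f : ℕ → (ZMod n → ZMod 2)) (Q S lam r p k : ℕ) (hr : r = (S+2)*lam) (hp : p = (S+1)*lam) :
    ((∑ w ∈ Finset.range (Q+2), f (k+w*r)) + ∑ u ∈ Finset.Icc 1 S, f (k+(Q+1)*r+u*lam))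
      + ((∑ w ∈ Finset.range (Q+1), f (k+p+w*r))
        + ∑ u ∈ Finset.Icc 1 (S+1), f (k+p+Q*r+u*lam))
    = (∑ w ∈ Finset.range (Q+1), f (k+w*r)) + ∑ w ∈ Finset.range (Q+1), f (k+p+w*r) := by
  have e1 : ∑ w ∈ Finset.range (Q+2), f (k+w*r)
      = (∑ w ∈ Finset.range (Q+1), f (k+w*r)) + f (k+(Q+1)*r) :=
    Finset.sum_range_succ _ _
  have e2 : ∑ u ∈ Finset.Icc 1 S, f (k+(Q+1)*r+u*lam)
      = ∑ u ∈ Finset.range S, f (k+(Q+1)*r+(u+1)*lam) := sum_Icc_one _ _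
  have e4 : ∑ u ∈ Finset.Icc 1 (S+1), f (k+p+Q*r+u*lam)
      = f (k+(Q+1)*r) + ∑ u ∈ Finset.range S, f (k+(Q+1)*r+(u+1)*lam) := by
    rw [sum_Icc_one]
    have harg : ∀ u : ℕ, k+p+Q*r+(u+1)*lam = k+(Q+1)*r+u*lam := by
      intro u; subst hr hp; ring
    simp only [harg]
    rw [Finset.sum_range_succ']
    simp only [Nat.mul_zero, Nat.zero_mul, Nat.add_zero]
    exact add_comm _ _
  rw [e1, e2, e4]
  set A := ∑ w ∈ Finset.range (Q+1), f (k+w*r)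
  set B := ∑ w ∈ Finset.range (Q+1), f (k+p+w*r)
  set x := f (k+(Q+1)*r)
  set t := ∑ u ∈ Finset.range S, f (k+(Q+1)*r+(u+1)*lam)
  calc (A + x + t) + (B + (x + t)) = (A + B) + ((x + x) + (t + t)) := by abel
    _ = A + B := by rw [addSelf, addSelf, add_zero, add_zero]


lemma idII (f : ℕ → (ZMod n → ZMod 2)) (Q S lam r e d : ℕ) (hr : r = (S+2)*lam) (hd : d ≤ S) :
    ((∑ w ∈ Finset.range (Q+2), f (e+w*r)) + ∑ u ∈ Finset.Icc 1 S, f (e+(Q+1)*r+u*lam))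
      + ∑ j ∈ Finset.range d,
          ((∑ w ∈ Finset.range (Q+1), f (e+(j+1)*lam+w*r)) + f (e+(Q+1)*r+j*lam))
    = (∑ j ∈ Finset.range (d+1), ∑ w ∈ Finset.range (Q+1), f (e+j*lam+w*r))
      + ∑ u ∈ Finset.Icc d S, f (e+(Q+1)*r+u*lam) := by
  set X : ℕ → (ZMod n → ZMod 2) := fun u => f (e+(Q+1)*r+u*lam) with hX
  set G : ℕ → (ZMod n → ZMod 2) := fun j => ∑ w ∈ Finset.range (Q+1), f (e+j*lam+w*r) with hG
  have e1 : ∑ w ∈ Finset.range (Q+2), f (e+w*r) = G 0 + X 0 := by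
    rw [Finset.sum_range_succ]
    simp only [hX, hG, Nat.zero_mul, Nat.add_zero]
  have e2 : ∑ u ∈ Finset.Icc 1 S, f (e+(Q+1)*r+u*lam) = ∑ u ∈ Finset.range S, X (u+1) :=
    sum_Icc_one _ _
  have e3 : ∑ j ∈ Finset.range d,
      ((∑ w ∈ Finset.range (Q+1), f (e+(j+1)*lam+w*r)) + f (e+(Q+1)*r+j*lam))
      = (∑ j ∈ Finset.range d, G (j+1)) + ∑ j ∈ Finset.range d, X j := by
    rw [← Finset.sum_add_distrib]
  have e5 : X 0 + ∑ u ∈ Finset.range S, X (u+1) = ∑ u ∈ Finset.range (S+1), X u := by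
    rw [Finset.sum_range_succ']; exact add_comm _ _
  have e6 : ∑ u ∈ Finset.range (S+1), X u
      = (∑ u ∈ Finset.range d, X u) + ∑ u ∈ Finset.Icc d S, X u := by
    rw [← Finset.Ico_add_one_right_eq_Icc, Finset.range_eq_Ico,
      ← Finset.sum_Ico_consecutive _ (Nat.zero_le d) (by omega : d ≤ S+1), Finset.range_eq_Ico]
  have e7 : G 0 + ∑ j ∈ Finset.range d, G (j+1) = ∑ j ∈ Finset.range (d+1), G j := by
    rw [Finset.sum_range_succ']; exact add_comm _ _
  rw [e1, e2, e3]
  calc G 0 + X 0 + (∑ u ∈ Finset.range S, X (u+1))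
        + ((∑ j ∈ Finset.range d, G (j+1)) + ∑ j ∈ Finset.range d, X j)
      = (G 0 + ∑ j ∈ Finset.range d, G (j+1))
        + ((X 0 + ∑ u ∈ Finset.range S, X (u+1)) + ∑ j ∈ Finset.range d, X j) := by abel
    _ = (∑ j ∈ Finset.range (d+1), G j)
        + (((∑ u ∈ Finset.range d, X u) + ∑ u ∈ Finset.Icc d S, X u)
            + ∑ j ∈ Finset.range d, X j) := by rw [e5, e6, e7]
    _ = (∑ j ∈ Finset.range (d+1), G j) + (∑ u ∈ Finset.Icc d S, X u)
        + ((∑ u ∈ Finset.range d, X u) + (∑ u ∈ Finset.range d, X u)) := by abel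
    _ = (∑ j ∈ Finset.range (d+1), G j) + ∑ u ∈ Finset.Icc d S, X u := by
        rw [addSelf, add_zero]

end idlemmas

lemma span_top_of_std {K : ℕ} [NeZero K] (N : Submodule (ZMod 2) (ZMod K → ZMod 2))
    (h : ∀ y : ZMod K, stdVec K y ∈ N) : N = ⊤ := by
  rw [eq_top_iff]
  intro v _
  have hv : v = ∑ y : ZMod K, v y • stdVec K y := by
    funext i
    simp only [Finset.sum_apply, Pi.smul_apply, stdVec, smul_eq_mul]
    rw [Finset.sum_eq_single i]
    · simp
    · intro b _ hb; simp [Ne.symm hb]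
    · intro hi; exact absurd (Finset.mem_univ i) hi
  rw [hv]
  exact Submodule.sum_mem _ fun y _ => Submodule.smul_mem _ _ (h y)

lemma lower_bound (K D m : ℕ) (hK : 0 < K) (hm : 0 < m) (hDK : D < K)
    (C' : Set (ZMod (m*K) → ZMod 2)) (h : IsIndexCode (m*K) (consecLiftedA K D m) C') :
    K - D ≤ C'.ncard := by
  haveI : NeZero K := ⟨hK.ne'⟩
  haveI : NeZero (m*K) := ⟨by positivity⟩
  haveI : Fact (Nat.Prime 2) := ⟨Nat.prime_two⟩
  have hKmK : K ≤ m * K := Nat.le_mul_of_pos_left K hm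
  set g : ZMod K → ZMod (m*K) := fun x => ((x.val : ℕ) : ZMod (m*K)) with hg
  set ρ : (ZMod (m*K) → ZMod 2) →ₗ[ZMod 2] (ZMod K → ZMod 2) :=
    LinearMap.funLeft (ZMod 2) (ZMod 2) g with hρ
  have hvalg : ∀ x : ZMod K, (g x).val = x.val := by
    intro x; rw [hg]; exact ZMod.val_cast_of_lt (lt_of_lt_of_le (ZMod.val_lt x) hKmK)
  have hcv : ∀ z : ZMod (m*K), ((z.val : ℕ) : ZMod (m*K)) = z := fun z => ZMod.natCast_rightInverse z
  have hcvK : ∀ z : ZMod K, ((z.val : ℕ) : ZMod K) = z := fun z => ZMod.natCast_rightInverse z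
  -- rho of a standard vector
  have hrho : ∀ z : ZMod (m*K), ρ (stdVec (m*K) z)
      = (if z.val < K then stdVec K ((z.val : ℕ) : ZMod K) else 0) := by
    intro z
    funext x
    have happ : ρ (stdVec (m*K) z) x = stdVec (m*K) z (g x) := rfl
    rw [happ]
    by_cases hzK : z.val < K
    · simp only [hzK, if_true]
      have hiff : g x = z ↔ x = ((z.val : ℕ) : ZMod K) := by
        constructor
        · intro hgz
          have : x.val = z.val := by rw [← hvalg x, hgz]
          rw [← hcvK x, this]
        · intro hx
          have : x.val = z.val := by
            rw [hx]; exact ZMod.val_cast_of_lt hzK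
          rw [hg]; simp only []
          rw [this]; exact hcv z
      simp only [stdVec]
      by_cases hc : x = ((z.val : ℕ) : ZMod K)
      · rw [if_pos (hiff.mpr hc), if_pos hc]
      · rw [if_neg (fun hh => hc (hiff.mp hh)), if_neg hc]
    · simp only [hzK, if_false]
      have : g x ≠ z := by
        intro hgz
        have : x.val = z.val := by rw [← hvalg x, hgz]
        have := ZMod.val_lt x
        omega
      show (if g x = z then (1:ZMod 2) else 0) = (0 : ZMod K → ZMod 2) x
      rw [if_neg this]
      rfl
  -- cast mod lemma: reduction mod K
  have hmodK : ∀ a : ℕ, ((a % (m*K) : ℕ) : ZMod K) = (a : ZMod K) := by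
    intro a
    conv_rhs => rw [← Nat.mod_add_div a (m*K)]
    push_cast
    rw [show ((m:ZMod K) * K) = ((m*K : ℕ) : ZMod K) by push_cast; ring]
    rw [show ((m*K : ℕ) : ZMod K) = 0 by
      rw [show m*K = K*m by ring]; push_cast; simp [ZMod.natCast_self]]
    ring
  -- claim 1 : each stdVec K y is in the span of ρ''C' and its shifted antidotes
  have claim1 : ∀ y : ZMod K, stdVec K y ∈ Submodule.span (ZMod 2)
      ((ρ '' C') ∪ (stdVec K '' {x | ∃ j : ℕ, 1 ≤ j ∧ j ≤ D ∧ x = y + (j : ℕ)})) := by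
    intro y
    have hy := h.2 (g y)
    have hmem : ρ (stdVec (m*K) (g y)) ∈
        Submodule.map ρ (Submodule.span (ZMod 2)
          (C' ∪ (stdVec (m*K) '' consecLiftedA K D m (g y)))) :=
      Submodule.mem_map_of_mem hy
    rw [Submodule.map_span] at hmem
    have heq : ρ (stdVec (m*K) (g y)) = stdVec K y := by
      rw [hrho]
      rw [if_pos (by rw [hvalg]; exact ZMod.val_lt y)]
      rw [hvalg, hcvK]
    rw [heq] at hmem
    have hsub : ρ '' (C' ∪ (stdVec (m*K) '' consecLiftedA K D m (g y))) ⊆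
        insert 0 ((ρ '' C') ∪ (stdVec K '' {x | ∃ j : ℕ, 1 ≤ j ∧ j ≤ D ∧ x = y + (j : ℕ)})) := by
      rintro v ⟨w, hw | ⟨u, hu, rfl⟩, rfl⟩
      · exact Set.mem_insert_of_mem _ (Or.inl ⟨w, hw, rfl⟩)
      · rcases hu with ⟨i, hi1, hi2, rfl⟩ | ⟨j, i, hj1, hj2, hi2, rfl⟩
        · -- same-message copies: project to zero
          left
          rw [hrho]
          have hval : (g y + ((i * K : ℕ) : ZMod (m*K))).val = y.val + i*K := by
            have : g y + ((i * K : ℕ) : ZMod (m*K)) = (((y.val + i*K : ℕ)) : ZMod (m*K)) := by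
              rw [hg]; push_cast; ring
            rw [this, ZMod.val_natCast_of_lt]
            have := ZMod.val_lt y
            have h1 : i * K ≤ (m-1) * K := Nat.mul_le_mul_right K (by omega)
            have h2 : (m-1) * K + K = m * K := by
              have : m - 1 + 1 = m := by omega
              calc (m-1)*K + K = ((m-1)+1)*K := by ring
                _ = m*K := by rw [this]
            omega
          rw [if_neg]
          rw [hval]
          have h1 : K ≤ i * K := Nat.le_mul_of_pos_left K (by omega)
          omega
        · -- known-interference copies
          rw [hrho]
          by_cases hcase : (g y + ((j + i * K : ℕ) : ZMod (m*K))).val < K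
          · right; right
            refine ⟨((g y + ((j + i * K : ℕ) : ZMod (m*K))).val : ZMod K), ⟨j, hj1, hj2, ?_⟩, by rw [if_pos hcase]⟩
            have hz : g y + ((j + i * K : ℕ) : ZMod (m*K)) = (((y.val + (j + i*K) : ℕ)) : ZMod (m*K)) := by
              rw [hg]; push_cast; ring
            rw [hz, ZMod.val_natCast, hmodK]
            push_cast
            rw [hcvK]
            rw [show ((K:ZMod K)) = ((K:ℕ) : ZMod K) by push_cast; ring, ZMod.natCast_self]
            ring
          · left; rw [if_neg hcase]
      
    have hfinal : Submodule.span (ZMod 2)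
          (ρ '' (C' ∪ (stdVec (m*K) '' consecLiftedA K D m (g y))))
        ≤ Submodule.span (ZMod 2) ((ρ '' C') ∪
            (stdVec K '' {x | ∃ j : ℕ, 1 ≤ j ∧ j ≤ D ∧ x = y + (j : ℕ)})) :=
      le_trans (Submodule.span_mono hsub) (le_of_eq Submodule.span_insert_zero)
    exact hfinal hmem
  -- the base antidote set near zero
  set B0 : Set (ZMod K → ZMod 2) :=
    stdVec K '' {x | ∃ j : ℕ, 1 ≤ j ∧ j ≤ D ∧ x = ((j : ℕ) : ZMod K)} with hB0
  set N : Submodule (ZMod 2) (ZMod K → ZMod 2) :=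
    Submodule.span (ZMod 2) ((ρ '' C') ∪ B0) with hN
  have claim2 : ∀ t : ℕ, stdVec K (-(t : ZMod K)) ∈ N := by
    intro t
    induction t using Nat.strong_induction_on with
    | _ t ih =>
      have h1 := claim1 (-(t : ZMod K))
      have hle : Submodule.span (ZMod 2)
          ((ρ '' C') ∪ (stdVec K '' {x | ∃ j : ℕ, 1 ≤ j ∧ j ≤ D ∧ x = -(t : ZMod K) + (j : ℕ)}))
          ≤ N := by
        apply Submodule.span_le.2
        rintro v (hv | ⟨x, ⟨j, hj1, hj2, rfl⟩, rfl⟩)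
        · exact Submodule.subset_span (Or.inl hv)
        · by_cases hjt : j ≤ t
          · have harg : -(t : ZMod K) + (j : ℕ) = -(((t - j : ℕ) : ZMod K)) := by
              rw [Nat.cast_sub hjt]; ring
            rw [harg]
            exact ih (t - j) (by omega)
          · have harg : -(t : ZMod K) + (j : ℕ) = ((j - t : ℕ) : ZMod K) := by
              rw [Nat.cast_sub (by omega : t ≤ j)]; ring
            rw [harg]
            exact Submodule.subset_span (Or.inr ⟨_, ⟨j - t, by omega, by omega, rfl⟩, rfl⟩)
      exact hle h1
  have hall : ∀ y : ZMod K, stdVec K y ∈ N := by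
    intro y
    have : y = -((((-y).val : ℕ)) : ZMod K) := by rw [hcvK]; ring
    rw [this]
    exact claim2 _
  have hNtop : N = ⊤ := span_top_of_std N hall
  -- counting
  have hfd : FiniteDimensional (ZMod 2) (ZMod K → ZMod 2) := by infer_instance
  have hcard : Module.finrank (ZMod 2) (ZMod K → ZMod 2) = K := by
    rw [Module.finrank_pi]
    simp [ZMod.card]
  -- finite sets
  have hC'fin : C'.Finite := h.1
  set F1 : Finset (ZMod K → ZMod 2) := hC'fin.toFinset.image ρ with hF1
  have hS1 : ρ '' C' = ↑F1 := by
    rw [hF1]; ext v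
    simp [Set.Finite.mem_toFinset]
  set F2 : Finset (ZMod K → ZMod 2) :=
    (Finset.Icc 1 D).image (fun j : ℕ => stdVec K ((j : ℕ) : ZMod K)) with hF2
  have hS2 : B0 = ↑F2 := by
    rw [hB0, hF2]; ext v
    constructor
    · rintro ⟨x, ⟨j, hj1, hj2, rfl⟩, rfl⟩
      simp only [Finset.coe_image, Set.mem_image, Finset.mem_coe, Finset.mem_Icc]
      exact ⟨j, by omega, rfl⟩
    · intro hv
      simp only [Finset.coe_image, Set.mem_image, Finset.mem_coe, Finset.mem_Icc] at hv
      obtain ⟨j, hj, rfl⟩ := hv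
      exact ⟨_, ⟨j, hj.1, hj.2, rfl⟩, rfl⟩
  have hsplit : N = Submodule.span (ZMod 2) (ρ '' C') ⊔ Submodule.span (ZMod 2) B0 := by
    rw [hN, Submodule.span_union]
  have hrank1 : Module.finrank (ZMod 2) (Submodule.span (ZMod 2) (ρ '' C')) ≤ C'.ncard := by
    rw [hS1]
    calc Module.finrank (ZMod 2) (Submodule.span (ZMod 2) (F1 : Set (ZMod K → ZMod 2)))
        ≤ F1.card := finrank_span_finset_le_card F1
      _ ≤ hC'fin.toFinset.card := Finset.card_image_le
      _ = C'.ncard := (Set.ncard_eq_toFinset_card C' hC'fin).symm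
  have hrank2 : Module.finrank (ZMod 2) (Submodule.span (ZMod 2) B0) ≤ D := by
    rw [hS2]
    calc Module.finrank (ZMod 2) (Submodule.span (ZMod 2) (F2 : Set (ZMod K → ZMod 2)))
        ≤ F2.card := finrank_span_finset_le_card F2
      _ ≤ (Finset.Icc 1 D).card := Finset.card_image_le
      _ = D := by rw [Nat.card_Icc]; omega
  have hKle : K ≤ Module.finrank (ZMod 2) (Submodule.span (ZMod 2) (ρ '' C'))
      + Module.finrank (ZMod 2) (Submodule.span (ZMod 2) B0) := by
    have h1 : Module.finrank (ZMod 2) N = K := by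
      rw [hNtop, finrank_top, hcard]
    have h2 := Submodule.finrank_sup_add_finrank_inf_eq
      (Submodule.span (ZMod 2) (ρ '' C')) (Submodule.span (ZMod 2) B0)
    rw [← hsplit] at h2
    omega
  omega

set_option maxHeartbeats 1000000 in
lemma code_decodes (K D lam m : ℕ) (hK : 0 < K) (hD : 0 < D) (hlam : 0 < lam)
    (hm : 0 < m) (hDK : D < K) (hdvd1 : lam ∣ (K - D)) (hdvd2 : (K - D) ∣ (K + lam))
    (hq : 2 ≤ (K + lam) / (K - D)) (hs : 2 ≤ (K - D) / lam) (k' : ZMod (m * K)) :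
    stdVec (m*K) k' ∈ Submodule.span (ZMod 2)
      (codeCaseX K D lam m ∪ (stdVec (m*K) '' consecLiftedA K D m k')) := by
  haveI : NeZero (m*K) := ⟨by positivity⟩
  obtain ⟨Q, hQ⟩ : ∃ Q, (K + lam) / (K - D) = Q + 2 := ⟨(K+lam)/(K-D) - 2, by omega⟩
  obtain ⟨S, hS⟩ : ∃ S, (K - D) / lam = S + 2 := ⟨(K-D)/lam - 2, by omega⟩
  obtain ⟨r, hrdef⟩ : ∃ x, x = K - D := ⟨K - D, rfl⟩
  obtain ⟨p, hpdef⟩ : ∃ x, x = (S+1)*lam := ⟨(S+1)*lam, rfl⟩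
  have hQr : (Q+2)*r = K + lam := by
    rw [hrdef, ← hQ]; exact Nat.div_mul_cancel hdvd2
  have hSlam : (S+2)*lam = r := by
    rw [hrdef, ← hS]; exact Nat.div_mul_cancel hdvd1
  have hexp1 : (Q+2)*r = (Q+1)*r + r := by ring
  have hexp2 : (Q+1)*r = Q*r + r := by ring
  have hexp3 : (S+2)*lam = S*lam + 2*lam := by ring
  have hexp4 : (S+1)*lam = S*lam + lam := by ring
  have hDr : D + r = K := by omega
  have hrp : r = p + lam := by omega
  have hr' : r = (S+2)*lam := hSlam.symm
  have hDlam : D + lam = (Q+1)*r := by omega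
  have hD3 : D = Q*r + p := by omega
  have hrpos : 0 < r := by omega
  have hppos : 0 < p := by omega
  set M := Submodule.span (ZMod 2)
      (codeCaseX K D lam m ∪ (stdVec (m*K) '' consecLiftedA K D m k')) with hM
  obtain ⟨a, hadef⟩ : ∃ x, x = k'.val := ⟨k'.val, rfl⟩
  have hcast : ((a : ℕ) : ZMod (m*K)) = k' := by
    rw [hadef]; exact ZMod.natCast_rightInverse k'
  -- antidote basis vectors
  have know1 : ∀ t : ℕ, 1 ≤ t → t ≤ m - 1 → stdVec (m*K) ((a + t*K : ℕ)) ∈ M := by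
    intro t h1 h2
    apply Submodule.subset_span
    right
    refine ⟨k' + ((t*K : ℕ) : ZMod (m*K)), Or.inl ⟨t, h1, h2, rfl⟩, ?_⟩
    congr 1
    push_cast [hcast]
    ring
  have know2 : ∀ j t : ℕ, 1 ≤ j → j ≤ D → t ≤ m - 1 →
      stdVec (m*K) ((a + (j + t*K) : ℕ)) ∈ M := by
    intro j t h1 h2 h3
    apply Submodule.subset_span
    right
    refine ⟨k' + ((j + t*K : ℕ) : ZMod (m*K)), Or.inr ⟨j, t, h1, h2, h3, rfl⟩, ?_⟩
    congr 1
    push_cast [hcast]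
    ring
  have knowE : ∀ j : ℕ, 1 ≤ j → j ≤ D → eSum K m (a + j) ∈ M := by
    intro j h1 h2
    unfold eSum
    apply Submodule.sum_mem
    intro t ht
    rw [Finset.mem_range] at ht
    have harg : a + j + t*K = a + (j + t*K) := by ring
    rw [harg]
    exact know2 j t h1 h2 (by omega)
  -- representative kp of the receiver in [1, K]
  obtain ⟨kp, hkp1, hkpK, hkpa⟩ : ∃ kp, 1 ≤ kp ∧ kp ≤ K ∧ kp % K = a % K := by
    refine ⟨if a % K = 0 then K else a % K, ?_, ?_, ?_⟩
    · split <;> omega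
    · have := Nat.mod_lt a hK; split <;> omega
    · split_ifs with h0
      · rw [Nat.mod_self, h0]
      · exact Nat.mod_mod_of_dvd a dvd_rfl
  -- generic knowledge of shifted eSums
  have knowX : ∀ x : ℕ, (∃ δ t : ℕ, 1 ≤ δ ∧ δ ≤ D ∧ x + t*K = kp + δ) → eSum K m x ∈ M := by
    rintro x ⟨δ, t, h1, h2, h3⟩
    have hmod : x % K = (a + δ) % K := by
      have e1 : (x + t*K) % K = x % K := Nat.add_mul_mod_self_right x t K
      have e2 : (kp + δ) % K = (a + δ) % K := Nat.ModEq.add_right δ hkpa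
      rw [← e1, h3, e2]
    rw [eSum_congr K m hK hmod]
    exact knowE δ h1 h2
  -- code vectors, in cleaned form
  have hc1 : (K + lam) / (K - D) - 1 = Q + 1 := by omega
  have hc2 : (K + lam) / (K - D) - 2 = Q := by omega
  have hc3 : (K - D) / lam - 2 = S := by omega
  have hc4 : (K - D) / lam - 1 = S + 1 := by omega
  have codeA : ∀ k : ℕ, 1 ≤ k → k ≤ lam →
      ((∑ w ∈ Finset.range (Q+2), eSum K m (k+w*r)) +
        ∑ u ∈ Finset.Icc 1 S, eSum K m (k+(Q+1)*r+u*lam)) ∈ M := by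
    intro k h1 h2
    apply Submodule.subset_span
    left
    refine Or.inl (Or.inl ⟨k, h1, h2, ?_⟩)
    rw [hc1, hc3, hQ, ← hrdef]
  have codeB : ∀ k : ℕ, lam + 1 ≤ k → k ≤ p →
      ((∑ w ∈ Finset.range (Q+1), eSum K m (k+w*r)) + eSum K m (k + (Q*r + p))) ∈ M := by
    intro k h1 h2
    apply Submodule.subset_span
    left
    refine Or.inl (Or.inr ⟨k, h1, by omega, ?_⟩)
    rw [hc1, ← hrdef]
    have harg : k + (Q+1)*r - lam = k + (Q*r + p) := by omega
    rw [harg]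
  have codeC : ∀ k : ℕ, p + 1 ≤ k → k ≤ r →
      ((∑ w ∈ Finset.range (Q+1), eSum K m (k+w*r)) +
        ∑ u ∈ Finset.Icc 1 (S+1), eSum K m (k+Q*r+u*lam)) ∈ M := by
    intro k h1 h2
    apply Submodule.subset_span
    left
    refine Or.inr ⟨k, by omega, by omega, ?_⟩
    rw [hc1, hc2, hc4, ← hrdef]
  -- reduce the goal to membership of eSum at kp
  suffices hkpmem : eSum K m kp ∈ M by
    have hEa : eSum K m a ∈ M := by
      rw [eSum_congr K m hK hkpa.symm]
      exact hkpmem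
    have hsplit : stdVec (m*K) k' = eSum K m a +
        ∑ t ∈ Finset.Icc 1 (m-1), stdVec (m*K) ((a + t*K : ℕ)) := by
      obtain ⟨m', rfl⟩ : ∃ m', m = m' + 1 := ⟨m - 1, by omega⟩
      have e0 : eSum K (m'+1) a = ∑ t ∈ Finset.range (m'+1),
          stdVec ((m'+1)*K) ((a + t*K : ℕ)) := rfl
      have e1 : eSum K (m'+1) a =
          (∑ t ∈ Finset.range m', stdVec ((m'+1)*K) ((a + (t+1)*K : ℕ))) + stdVec ((m'+1)*K) k' := by
        rw [e0, Finset.sum_range_succ']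
        congr 1
        rw [show a + 0*K = a by ring, hcast]
      have e2 : ∑ t ∈ Finset.Icc 1 ((m'+1)-1), stdVec ((m'+1)*K) ((a + t*K : ℕ))
          = ∑ t ∈ Finset.range m', stdVec ((m'+1)*K) ((a + (t+1)*K : ℕ)) := by
        rw [show (m'+1)-1 = m' by omega]
        exact sum_Icc_one _ _
      rw [e2, e1]
      rw [add_comm _ (stdVec ((m'+1)*K) k'), add_assoc, addSelf, add_zero]
    rw [hsplit]
    refine Submodule.add_mem M hEa (Submodule.sum_mem M ?_)
    intro t ht
    rw [Finset.mem_Icc] at ht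
    exact know1 t ht.1 ht.2
  -- main case analysis on kp
  by_cases hI : kp ≤ lam
  · -- Case I: kp ≤ lam
    have hid := idI (eSum K m) Q S lam r p kp hr' hpdef
    have hL : ((∑ w ∈ Finset.range (Q+2), eSum K m (kp+w*r)) +
          ∑ u ∈ Finset.Icc 1 S, eSum K m (kp+(Q+1)*r+u*lam))
        + ((∑ w ∈ Finset.range (Q+1), eSum K m (kp+p+w*r)) +
          ∑ u ∈ Finset.Icc 1 (S+1), eSum K m (kp+p+Q*r+u*lam)) ∈ M :=
      Submodule.add_mem M (codeA kp hkp1 hI) (codeC (kp+p) (by omega) (by omega))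
    rw [hid] at hL
    have hXmem : (∑ w ∈ Finset.range Q, eSum K m (kp+(w+1)*r)) ∈ M := by
      refine Submodule.sum_mem M fun w hw => knowX _ ⟨(w+1)*r, 0, ?_, ?_, by ring⟩
      · have : 0 < (w+1)*r := Nat.mul_pos (by omega) hrpos
        omega
      · rw [Finset.mem_range] at hw
        have : (w+1)*r ≤ Q*r := Nat.mul_le_mul_right r (by omega)
        omega
    have hYmem : (∑ w ∈ Finset.range (Q+1), eSum K m (kp+p+w*r)) ∈ M := by
      refine Submodule.sum_mem M fun w hw => knowX _ ⟨p + w*r, 0, by omega, ?_, by ring⟩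
      rw [Finset.mem_range] at hw
      have : w*r ≤ Q*r := Nat.mul_le_mul_right r (by omega)
      omega
    refine mem_of_add_mem M (w := (∑ w ∈ Finset.range Q, eSum K m (kp+(w+1)*r)) +
        ∑ w ∈ Finset.range (Q+1), eSum K m (kp+p+w*r)) ?_ (Submodule.add_mem M hXmem hYmem)
    have e_split : ∑ w ∈ Finset.range (Q+1), eSum K m (kp+w*r)
        = eSum K m kp + ∑ w ∈ Finset.range Q, eSum K m (kp+(w+1)*r) := by
      rw [Finset.sum_range_succ']
      rw [show kp + 0*r = kp by ring]
      exact add_comm _ _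
    have heq : eSum K m kp + ((∑ w ∈ Finset.range Q, eSum K m (kp+(w+1)*r)) +
        ∑ w ∈ Finset.range (Q+1), eSum K m (kp+p+w*r))
        = (∑ w ∈ Finset.range (Q+1), eSum K m (kp+w*r)) +
          ∑ w ∈ Finset.range (Q+1), eSum K m (kp+p+w*r) := by
      rw [e_split]; abel
    rw [heq]
    exact hL
  · by_cases hII : K ≤ kp + S*lam
    · -- Case II: kp near the top: K ≤ kp + S*lam
      obtain ⟨c, hc⟩ : ∃ c, kp + c = K := ⟨K - kp, by omega⟩
      have hcS : c ≤ S*lam := by omega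
      obtain ⟨b, hb⟩ : ∃ b, b + c = p := ⟨p - c, by omega⟩
      have hb1 : 1 ≤ b := by omega
      obtain ⟨d, e, he1, helam, hbde⟩ : ∃ d e, 1 ≤ e ∧ e ≤ lam ∧ b = d*lam + e := by
        refine ⟨(b-1)/lam, (b-1)%lam + 1, by omega, ?_, ?_⟩
        · have := Nat.mod_lt (b-1) hlam; omega
        · have := Nat.mod_add_div' (b-1) lam; omega
      have hdS : d ≤ S := by
        by_contra hcon
        push_neg at hcon
        have h2 : (S+1)*lam ≤ d*lam := Nat.mul_le_mul_right lam (by omega)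
        omega
      have hkp_eq : kp = e + (Q+1)*r + d*lam := by omega
      have hid := idII (eSum K m) Q S lam r e d hr' hdS
      have hLmem : ((∑ w ∈ Finset.range (Q+2), eSum K m (e+w*r)) +
            ∑ u ∈ Finset.Icc 1 S, eSum K m (e+(Q+1)*r+u*lam))
          + ∑ j ∈ Finset.range d, ((∑ w ∈ Finset.range (Q+1), eSum K m (e+(j+1)*lam+w*r))
            + eSum K m (e+(Q+1)*r+j*lam)) ∈ M := by
        refine Submodule.add_mem M (codeA e he1 helam) (Submodule.sum_mem M fun j hj => ?_)
        rw [Finset.mem_range] at hj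
        have m1 : lam ≤ (j+1)*lam := Nat.le_mul_of_pos_left lam (by omega)
        have m2 : (j+1)*lam ≤ d*lam := Nat.mul_le_mul_right lam (by omega)
        have harg : ∀ w : ℕ, e+(j+1)*lam+w*r = (e+(j+1)*lam)+w*r := fun w => by ring
        have m3 : (j+1)*lam = j*lam + lam := by ring
        have harg2 : e+(Q+1)*r+j*lam = (e+(j+1)*lam) + (Q*r + p) := by omega
        rw [harg2]
        exact codeB (e+(j+1)*lam) (by omega) (by omega)
      rw [hid] at hLmem
      have hdmem : d ∈ Finset.Icc d S := by
        rw [Finset.mem_Icc]; omega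
      have hTsplit : ∑ u ∈ Finset.Icc d S, eSum K m (e+(Q+1)*r+u*lam)
          = eSum K m kp + ∑ u ∈ (Finset.Icc d S).erase d, eSum K m (e+(Q+1)*r+u*lam) := by
        rw [← Finset.add_sum_erase _ _ hdmem, hkp_eq]
      rw [hTsplit] at hLmem
      have hHmem : (∑ j ∈ Finset.range (d+1), ∑ w ∈ Finset.range (Q+1),
          eSum K m (e+j*lam+w*r)) ∈ M := by
        refine Submodule.sum_mem M fun j hj => Submodule.sum_mem M fun w hw => ?_
        rw [Finset.mem_range] at hj hw
        have m1 : j*lam ≤ d*lam := Nat.mul_le_mul_right lam (by omega)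
        have m5 : w*r ≤ Q*r := Nat.mul_le_mul_right r (by omega)
        have m4 : d*lam ≤ S*lam := Nat.mul_le_mul_right lam hdS
        have hKQ : K = (Q+1)*r + p := by omega
        exact knowX _ ⟨e+j*lam+w*r + K - kp, 1, by omega, by omega, by omega⟩
      have hT'mem : (∑ u ∈ (Finset.Icc d S).erase d, eSum K m (e+(Q+1)*r+u*lam)) ∈ M := by
        refine Submodule.sum_mem M fun u hu => ?_
        rw [Finset.mem_erase, Finset.mem_Icc] at hu
        have hud : d + 1 ≤ u := by omega
        have m6 : (u-d)*lam + d*lam = u*lam := by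
          rw [← add_mul, Nat.sub_add_cancel (by omega)]
        have m7 : 1*lam ≤ (u-d)*lam := Nat.mul_le_mul_right lam (by omega)
        have m8 : (u-d)*lam ≤ S*lam := Nat.mul_le_mul_right lam (by omega)
        exact knowX _ ⟨(u-d)*lam, 0, by omega, by omega, by omega⟩
      refine mem_of_add_mem M (w := (∑ j ∈ Finset.range (d+1), ∑ w ∈ Finset.range (Q+1),
          eSum K m (e+j*lam+w*r)) +
          ∑ u ∈ (Finset.Icc d S).erase d, eSum K m (e+(Q+1)*r+u*lam)) ?_
        (Submodule.add_mem M hHmem hT'mem)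
      have heq : eSum K m kp + ((∑ j ∈ Finset.range (d+1), ∑ w ∈ Finset.range (Q+1),
          eSum K m (e+j*lam+w*r)) +
          ∑ u ∈ (Finset.Icc d S).erase d, eSum K m (e+(Q+1)*r+u*lam))
          = (∑ j ∈ Finset.range (d+1), ∑ w ∈ Finset.range (Q+1), eSum K m (e+j*lam+w*r))
            + (eSum K m kp +
              ∑ u ∈ (Finset.Icc d S).erase d, eSum K m (e+(Q+1)*r+u*lam)) := by abel
      rw [heq]
      exact hLmem
    · -- Case III: generic kp, single code vector
      obtain ⟨w0, b, hb1, hbr, hkp_eq⟩ : ∃ w0 b, 1 ≤ b ∧ b ≤ r ∧ kp = b + w0*r := by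
        refine ⟨(kp-1)/r, (kp-1)%r + 1, by omega, ?_, ?_⟩
        · have := Nat.mod_lt (kp-1) hrpos; omega
        · have := Nat.mod_add_div' (kp-1) r; omega
      have hw0Q2 : w0 ≤ Q+1 := by
        by_contra hcon
        push_neg at hcon
        have : (Q+2)*r ≤ w0*r := Nat.mul_le_mul_right r (by omega)
        omega
      have hterm : ∀ w : ℕ, w ≤ Q+1 → w ≠ w0 → w ≤ w0 + Q → eSum K m (b+w*r) ∈ M := by
        intro w hwle hwne hwQ
        rcases Nat.lt_or_ge w w0 with hlt | hge
        · have m1 : (w0-w)*r + w*r = w0*r := by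
            rw [← add_mul, Nat.sub_add_cancel (by omega)]
          have m2 : 1*r ≤ (w0-w)*r := Nat.mul_le_mul_right r (by omega)
          have m3 : (w0-w)*r ≤ (Q+1)*r := Nat.mul_le_mul_right r (by omega)
          exact knowX _ ⟨K - (w0-w)*r, 1, by omega, by omega, by omega⟩
        · have hgt : w0 < w := by omega
          have m1 : (w-w0)*r + w0*r = w*r := by
            rw [← add_mul, Nat.sub_add_cancel (by omega)]
          have m2 : 1*r ≤ (w-w0)*r := Nat.mul_le_mul_right r (by omega)
          have m3 : (w-w0)*r ≤ Q*r := Nat.mul_le_mul_right r (by omega)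
          exact knowX _ ⟨(w-w0)*r, 0, by omega, by omega, by omega⟩
      by_cases hA : b ≤ lam
      · -- b is a type-A index
        have hw01 : 1 ≤ w0 := by
          by_contra hcon
          push_neg at hcon
          have h0 : w0*r = 0 := by
            have : w0 = 0 := by omega
            simp [this]
          omega
        have hcode := codeA b hb1 hA
        have hw0mem : w0 ∈ Finset.range (Q+2) := by
          rw [Finset.mem_range]; omega
        have hsplitsum : ∑ w ∈ Finset.range (Q+2), eSum K m (b+w*r)
            = eSum K m kp + ∑ w ∈ (Finset.range (Q+2)).erase w0, eSum K m (b+w*r) := by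
          rw [← Finset.add_sum_erase _ _ hw0mem, hkp_eq]
        rw [hsplitsum] at hcode
        have herase : (∑ w ∈ (Finset.range (Q+2)).erase w0, eSum K m (b+w*r)) ∈ M := by
          refine Submodule.sum_mem M fun w hw => ?_
          rw [Finset.mem_erase, Finset.mem_range] at hw
          exact hterm w (by omega) hw.1 (by omega)
        have htail : (∑ u ∈ Finset.Icc 1 S, eSum K m (b+(Q+1)*r+u*lam)) ∈ M := by
          refine Submodule.sum_mem M fun u hu => ?_
          rw [Finset.mem_Icc] at hu
          have m1 : (Q+1-w0)*r + w0*r = (Q+1)*r := by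
            rw [← add_mul, Nat.sub_add_cancel (by omega)]
          have m2 : 1*lam ≤ u*lam := Nat.mul_le_mul_right lam (by omega)
          have m3 : (u+1)*lam ≤ (S+2)*lam := Nat.mul_le_mul_right lam (by omega)
          have m4 : (u+1)*lam = u*lam + lam := by ring
          have m5 : 1*r ≤ w0*r := Nat.mul_le_mul_right r (by omega)
          exact knowX _ ⟨(Q+1-w0)*r + u*lam, 0, by omega, by omega, by omega⟩
        refine mem_of_add_mem M (w := (∑ w ∈ (Finset.range (Q+2)).erase w0, eSum K m (b+w*r)) +
            ∑ u ∈ Finset.Icc 1 S, eSum K m (b+(Q+1)*r+u*lam)) ?_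
          (Submodule.add_mem M herase htail)
        rw [← add_assoc]
        exact hcode
      · by_cases hB : b ≤ p
        · -- b is a type-B index
          have hw0Q : w0 ≤ Q := by
            by_contra hcon
            push_neg at hcon
            have : (Q+1)*r ≤ w0*r := Nat.mul_le_mul_right r (by omega)
            omega
          have hcode := codeB b (by omega) hB
          have hw0mem : w0 ∈ Finset.range (Q+1) := by
            rw [Finset.mem_range]; omega
          have hsplitsum : ∑ w ∈ Finset.range (Q+1), eSum K m (b+w*r)
              = eSum K m kp + ∑ w ∈ (Finset.range (Q+1)).erase w0, eSum K m (b+w*r) := by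
            rw [← Finset.add_sum_erase _ _ hw0mem, hkp_eq]
          rw [hsplitsum] at hcode
          have herase : (∑ w ∈ (Finset.range (Q+1)).erase w0, eSum K m (b+w*r)) ∈ M := by
            refine Submodule.sum_mem M fun w hw => ?_
            rw [Finset.mem_erase, Finset.mem_range] at hw
            exact hterm w (by omega) hw.1 (by omega)
          have htail : eSum K m (b + (Q*r + p)) ∈ M := by
            have m1 : (Q-w0)*r + w0*r = Q*r := by
              rw [← add_mul, Nat.sub_add_cancel (by omega)]
            have m3 : (Q-w0)*r ≤ Q*r := Nat.mul_le_mul_right r (by omega)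
            exact knowX _ ⟨(Q-w0)*r + p, 0, by omega, by omega, by omega⟩
          refine mem_of_add_mem M (w := (∑ w ∈ (Finset.range (Q+1)).erase w0, eSum K m (b+w*r)) +
              eSum K m (b + (Q*r + p))) ?_ (Submodule.add_mem M herase htail)
          rw [← add_assoc]
          exact hcode
        · -- b is a type-C index
          have hw0Q : w0 ≤ Q := by
            by_contra hcon
            push_neg at hcon
            have : (Q+1)*r ≤ w0*r := Nat.mul_le_mul_right r (by omega)
            omega
          have hcode := codeC b (by omega) hbr
          have hw0mem : w0 ∈ Finset.range (Q+1) := by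
            rw [Finset.mem_range]; omega
          have hsplitsum : ∑ w ∈ Finset.range (Q+1), eSum K m (b+w*r)
              = eSum K m kp + ∑ w ∈ (Finset.range (Q+1)).erase w0, eSum K m (b+w*r) := by
            rw [← Finset.add_sum_erase _ _ hw0mem, hkp_eq]
          rw [hsplitsum] at hcode
          have herase : (∑ w ∈ (Finset.range (Q+1)).erase w0, eSum K m (b+w*r)) ∈ M := by
            refine Submodule.sum_mem M fun w hw => ?_
            rw [Finset.mem_erase, Finset.mem_range] at hw
            exact hterm w (by omega) hw.1 (by omega)
          have htail : (∑ u ∈ Finset.Icc 1 (S+1), eSum K m (b+Q*r+u*lam)) ∈ M := by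
            refine Submodule.sum_mem M fun u hu => ?_
            rw [Finset.mem_Icc] at hu
            have m1 : (Q-w0)*r + w0*r = Q*r := by
              rw [← add_mul, Nat.sub_add_cancel (by omega)]
            have m2 : 1*lam ≤ u*lam := Nat.mul_le_mul_right lam (by omega)
            have m3 : u*lam ≤ (S+1)*lam := Nat.mul_le_mul_right lam (by omega)
            have m4 : (Q-w0)*r ≤ Q*r := Nat.mul_le_mul_right r (by omega)
            exact knowX _ ⟨(Q-w0)*r + u*lam, 0, by omega, by omega, by omega⟩
          refine mem_of_add_mem M (w := (∑ w ∈ (Finset.range (Q+1)).erase w0, eSum K m (b+w*r)) +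
              ∑ u ∈ Finset.Icc 1 (S+1), eSum K m (b+Q*r+u*lam)) ?_
            (Submodule.add_mem M herase htail)
          rw [← add_assoc]
          exact hcode

/-- **Corollary 3 (lift of Case X).** If `λ ∣ K - D`, `K - D ∣ K + λ`,
`q = (K + λ)/(K - D) ≥ 2` and `s = (K - D)/λ ≥ 2`, then the lifted code is a valid
scalar linear index code of optimal length `K - D` for the lifted consecutive-antidote
problem on `m*K` messages. -/
theorem lifted_code_caseX (K D lam m : ℕ) (hK : 0 < K) (hD : 0 < D) (hlam : 0 < lam)
    (hm : 0 < m) (hDK : D < K) (hdvd1 : lam ∣ (K - D)) (hdvd2 : (K - D) ∣ (K + lam))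
    (hq : 2 ≤ (K + lam) / (K - D)) (hs : 2 ≤ (K - D) / lam) :
    (IsIndexCode (m * K) (consecLiftedA K D m) (codeCaseX K D lam m) ∧
      (codeCaseX K D lam m).ncard = K - D) ∧
    (∀ C' : Set (ZMod (m * K) → ZMod 2),
      IsIndexCode (m * K) (consecLiftedA K D m) C' → K - D ≤ C'.ncard) := by
  have hrpos : 0 < K - D := by omega
  have hlamle : lam ≤ K - D := Nat.le_of_dvd hrpos hdvd1
  have h2lam : 2*lam ≤ K - D := by
    have h1 : ((K-D)/lam)*lam = K - D := Nat.div_mul_cancel hdvd1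
    have h2 : 2*lam ≤ ((K-D)/lam)*lam := Nat.mul_le_mul_right lam hs
    omega
  -- enumeration of the code by an index in [1, K-D]
  set gfun : ℕ → (ZMod (m*K) → ZMod 2) := fun k =>
    if k ≤ lam then
      (∑ w ∈ Finset.range ((K + lam) / (K - D)), eSum K m (k + w * (K - D))) +
        ∑ u ∈ Finset.Icc 1 ((K - D) / lam - 2),
          eSum K m (k + ((K + lam) / (K - D) - 1) * (K - D) + u * lam)
    else if k ≤ K - D - lam then
      (∑ w ∈ Finset.range ((K + lam) / (K - D) - 1), eSum K m (k + w * (K - D))) +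
        eSum K m (k + ((K + lam) / (K - D) - 1) * (K - D) - lam)
    else
      (∑ w ∈ Finset.range ((K + lam) / (K - D) - 1), eSum K m (k + w * (K - D))) +
        ∑ u ∈ Finset.Icc 1 ((K - D) / lam - 1),
          eSum K m (k + ((K + lam) / (K - D) - 2) * (K - D) + u * lam)
    with hgfun
  have himg : codeCaseX K D lam m = gfun '' Set.Icc 1 (K - D) := by
    ext v
    constructor
    · rintro ((⟨k, h1, h2, rfl⟩ | ⟨k, h1, h2, rfl⟩) | ⟨k, h1, h2, rfl⟩)
      · refine ⟨k, Set.mem_Icc.mpr ⟨h1, by omega⟩, ?_⟩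
        rw [hgfun]
        simp only [if_pos h2]
      · refine ⟨k, Set.mem_Icc.mpr ⟨by omega, by omega⟩, ?_⟩
        rw [hgfun]
        simp only []
        rw [if_neg (by omega), if_pos h2]
      · refine ⟨k, Set.mem_Icc.mpr ⟨by omega, h2⟩, ?_⟩
        rw [hgfun]
        simp only []
        rw [if_neg (by omega), if_neg (by omega)]
    · rintro ⟨k, hk, rfl⟩
      rw [Set.mem_Icc] at hk
      rw [hgfun]
      simp only []
      split_ifs with hc1 hc2
      · exact Or.inl (Or.inl ⟨k, hk.1, hc1, rfl⟩)
      · exact Or.inl (Or.inr ⟨k, by omega, hc2, rfl⟩)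
      · exact Or.inr ⟨k, by omega, hk.2, rfl⟩
  have hfin : (codeCaseX K D lam m).Finite := by
    rw [himg]
    exact (Set.finite_Icc 1 (K-D)).image gfun
  have hcode : IsIndexCode (m * K) (consecLiftedA K D m) (codeCaseX K D lam m) :=
    ⟨hfin, fun k' => code_decodes K D lam m hK hD hlam hm hDK hdvd1 hdvd2 hq hs k'⟩
  have hlower : ∀ C' : Set (ZMod (m * K) → ZMod 2),
      IsIndexCode (m * K) (consecLiftedA K D m) C' → K - D ≤ C'.ncard :=
    fun C' hC' => lower_bound K D m hK hm hDK C' hC'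
  have hcard_le : (codeCaseX K D lam m).ncard ≤ K - D := by
    rw [himg]
    calc (gfun '' Set.Icc 1 (K-D)).ncard ≤ (Set.Icc 1 (K-D)).ncard :=
          Set.ncard_image_le (Set.finite_Icc 1 (K-D))
      _ = K - D := by
          rw [← Finset.coe_Icc, Set.ncard_coe_finset, Nat.card_Icc]
          omega
  exact ⟨⟨hcode, le_antisymm hcard_le (hlower _ hcode)⟩, hlower⟩
end

section
/- Let K, D be positive integers with D < K and D dividing K. Then: (i) for every k ∈ ZMod (2K), the m = 2 lifted antidote pattern of the problem with K messages and antidotes {k + D} equals {k + K, k + D, k + D + K} ⊆ ZMod (2K), and, setting K' = 2K and D' = K + D, this set equals {k + K'/2, k + (D' − K'/2), k + D'} with D' − K'/2 = D dividing K'/2 = K; (ii) the m = 2 lift of the code C_a = { e_{i+(j−1)D} + e_{i+jD} : 1 ≤ i ≤ D, 1 ≤ j ≤ K/D − 1 } ⊆ V_K equals the code C_b = { e_{i+jD} + e_{K+i+jD} + e_{i+(j+1)D} + e_{K+i+(j+1)D} : 1 ≤ i ≤ D, 0 ≤ j ≤ K/D − 2 } ⊆ V_{2K}. -/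
/-- The lift `t^(m)` of a vector `t ∈ V_K`: `(t^(m))_j = t_{j mod K}`. -/
def liftVec (K m : ℕ) (t : ZMod K → ZMod 2) : ZMod (m * K) → ZMod 2 :=
  fun j => t (ZMod.castHom (dvd_mul_left K m) (ZMod K) j)

/-- The lifted antidote pattern on `m*K` messages associated to `a : Fin d → ℕ`. -/
def liftedA (K m d : ℕ) (a : Fin d → ℕ) (k : ZMod (m * K)) : Set (ZMod (m * K)) :=
  {x | ∃ i : ℕ, 1 ≤ i ∧ i ≤ m - 1 ∧ x = k + (i * K : ℕ)} ∪
  {x | ∃ j : Fin d, ∃ i : ℕ, i ≤ m - 1 ∧ x = k + (a j : ℕ) + (i * K : ℕ)}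

/-- The optimal code `C_a` of Case (a): `{e_{i+(j-1)D} + e_{i+jD}}` on `K` messages. -/
def codeCaseA (K D : ℕ) : Set (ZMod K → ZMod 2) :=
  {v | ∃ i j : ℕ, 1 ≤ i ∧ i ≤ D ∧ 1 ≤ j ∧ j ≤ K / D - 1 ∧
    v = stdVec K ((i + (j - 1) * D : ℕ)) + stdVec K ((i + j * D : ℕ))}

/-- The optimal code `C_b` of Case (b) on `2K` messages:
`{e_{i+jD} + e_{K+i+jD} + e_{i+(j+1)D} + e_{K+i+(j+1)D}}`. -/
def codeCaseB (K D : ℕ) : Set (ZMod (2 * K) → ZMod 2) :=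
  {v | ∃ i j : ℕ, 1 ≤ i ∧ i ≤ D ∧ j ≤ K / D - 2 ∧
    v = stdVec (2 * K) ((i + j * D : ℕ)) + stdVec (2 * K) ((K + i + j * D : ℕ)) +
      stdVec (2 * K) ((i + (j + 1) * D : ℕ)) + stdVec (2 * K) ((K + i + (j + 1) * D : ℕ))}

lemma modeq_two_cases (K a n : ℕ) (hK : 0 < K) :
    a ≡ n [MOD K] ↔ (a ≡ n [MOD 2 * K] ∨ a ≡ n + K [MOD 2 * K]) := by
  rw [Nat.ModEq.comm.eq, Nat.modEq_iff_dvd, Nat.ModEq.comm.eq, Nat.modEq_iff_dvd,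
    Nat.ModEq.comm.eq, Nat.modEq_iff_dvd]
  push_cast
  constructor
  · rintro ⟨t, ht⟩
    rcases Int.even_or_odd t with ⟨s, hs⟩ | ⟨s, hs⟩
    · left; exact ⟨s, by subst hs; push_cast at ht ⊢; linarith⟩
    · right; exact ⟨s, by subst hs; push_cast at ht ⊢; linarith⟩
  · rintro (⟨t, ht⟩ | ⟨t, ht⟩)
    · exact ⟨2 * t, by push_cast at ht ⊢; linarith⟩
    · exact ⟨2 * t + 1, by push_cast at ht ⊢; linarith⟩

lemma castHom_eq_iff (K : ℕ) (hK : 0 < K) (x : ZMod (2 * K)) (n : ℕ) :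
    ZMod.castHom (dvd_mul_left K 2) (ZMod K) x = (n : ZMod K) ↔
      x = (n : ZMod (2 * K)) ∨ x = ((n + K : ℕ) : ZMod (2 * K)) := by
  haveI : NeZero (2 * K) := ⟨by omega⟩
  obtain ⟨a, rfl⟩ := ZMod.natCast_zmod_surjective (n := 2 * K) x
  rw [map_natCast, ZMod.natCast_eq_natCast_iff, ZMod.natCast_eq_natCast_iff,
    ZMod.natCast_eq_natCast_iff]
  exact modeq_two_cases K a n hK

lemma lift_stdVec (K : ℕ) (hK : 0 < K) (n : ℕ) :
    liftVec K 2 (stdVec K (n : ℕ)) =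
      stdVec (2 * K) ((n : ℕ)) + stdVec (2 * K) ((n + K : ℕ)) := by
  have hne : ((n : ℕ) : ZMod (2 * K)) ≠ ((n + K : ℕ) : ZMod (2 * K)) := by
    rw [Ne, ZMod.natCast_eq_natCast_iff, Nat.ModEq.comm.eq, Nat.modEq_iff_dvd]
    push_cast
    rw [show ((n : ℤ) - (n + K)) = -K by ring, Int.dvd_neg]
    intro h
    have := Int.le_of_dvd (by exact_mod_cast hK) h
    omega
  funext x
  simp only [liftVec, stdVec, Pi.add_apply]
  by_cases h1 : x = ((n : ℕ) : ZMod (2 * K)) <;>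
    by_cases h2 : x = ((n + K : ℕ) : ZMod (2 * K))
  · exact absurd (h1 ▸ h2) hne
  · rw [if_pos h1, if_neg h2,
      if_pos ((castHom_eq_iff K hK x n).mpr (Or.inl h1))]
    norm_num
  · rw [if_neg h1, if_pos h2,
      if_pos ((castHom_eq_iff K hK x n).mpr (Or.inr h2))]
    norm_num
  · rw [if_neg h1, if_neg h2,
      if_neg (fun h => by rcases (castHom_eq_iff K hK x n).mp h with h | h <;> tauto)]
    norm_num

lemma lift_add (K : ℕ) (u v : ZMod K → ZMod 2) :
    liftVec K 2 (u + v) = liftVec K 2 u + liftVec K 2 v := rfl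

/-- **Proposition 1.** For `D ∣ K`, `D < K`: (i) the `m = 2` lift of the antidote
pattern `{k + D}` on `K` messages equals `{k + K, k + D, k + D + K}` on `2K` messages,
which, with `K' = 2K` and `D' = K + D`, is `{k + K'/2, k + (D' - K'/2), k + D'}` with
`D' - K'/2 = D` dividing `K'/2 = K`; (ii) the `m = 2` lift of the Case (a) code equals
the Case (b) code. -/
theorem caseA_lift_is_caseB (K D : ℕ) (hK : 0 < K) (hD : 0 < D) (hDK : D < K)
    (hdvd : D ∣ K) :
    (∀ k : ZMod (2 * K),
      liftedA K 2 1 (fun _ => D) k =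
        ({k + (K : ℕ), k + (D : ℕ), k + (D + K : ℕ)} : Set (ZMod (2 * K))) ∧
      ({k + (K : ℕ), k + (D : ℕ), k + (D + K : ℕ)} : Set (ZMod (2 * K))) =
        ({k + ((2 * K) / 2 : ℕ), k + ((K + D) - (2 * K) / 2 : ℕ), k + ((K + D : ℕ))} :
          Set (ZMod (2 * K))) ∧
      ((K + D) - (2 * K) / 2 = D ∧ ((K + D) - (2 * K) / 2) ∣ ((2 * K) / 2))) ∧
    liftVec K 2 '' codeCaseA K D = codeCaseB K D := by
  constructor
  · intro k
    refine ⟨?_, ?_, by omega, ?_⟩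
    · ext x
      simp only [liftedA, Set.mem_union, Set.mem_setOf_eq, Set.mem_insert_iff,
        Set.mem_singleton_iff]
      constructor
      · rintro (⟨i, h1, h2, rfl⟩ | ⟨j, i, h2, rfl⟩)
        · have hi : i = 1 := by omega
          subst hi
          left; push_cast; ring
        · have hi : i = 0 ∨ i = 1 := by omega
          rcases hi with rfl | rfl
          · right; left; push_cast; ring
          · right; right; push_cast; ring
      · rintro (rfl | rfl | rfl)
        · exact Or.inl ⟨1, le_refl 1, le_refl 1, by push_cast; ring⟩
        · exact Or.inr ⟨0, 0, by omega, by push_cast; ring⟩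
        · exact Or.inr ⟨0, 1, by omega, by push_cast; ring⟩
    · rw [show 2 * K / 2 = K by omega, show K + D - K = D by omega,
        show D + K = K + D by omega]
    · rw [show K + D - 2 * K / 2 = D by omega, show 2 * K / 2 = K by omega]
      exact hdvd
  · have hKD : 2 ≤ K / D := by
      obtain ⟨t, ht⟩ := hdvd
      subst ht
      rw [Nat.mul_div_cancel_left _ hD]
      rcases t with _ | _ | t <;> omega
    ext v
    simp only [Set.mem_image, codeCaseA, codeCaseB, Set.mem_setOf_eq]
    constructor
    · rintro ⟨w, ⟨i, j, hi1, hi2, hj1, hj2, rfl⟩, rfl⟩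
      refine ⟨i, j - 1, hi1, hi2, by omega, ?_⟩
      rw [lift_add, lift_stdVec K hK, lift_stdVec K hK,
        show j - 1 + 1 = j by omega,
        show i + (j - 1) * D + K = K + i + (j - 1) * D by omega,
        show i + j * D + K = K + i + j * D by omega]
      abel
    · rintro ⟨i, j, hi1, hi2, hj, rfl⟩
      refine ⟨stdVec K ((i + j * D : ℕ)) + stdVec K ((i + (j + 1) * D : ℕ)),
        ⟨i, j + 1, hi1, hi2, by omega, by omega, rfl⟩, ?_⟩
      rw [lift_add, lift_stdVec K hK, lift_stdVec K hK,
        show i + j * D + K = K + i + j * D by omega,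
        show i + (j + 1) * D + K = K + i + (j + 1) * D by omega]
      abel
end
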